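/- The Majority Group Deterministic Mechanism (MGDM), which places the facility at the median location of a largest group, is strategyproof: no agent can strictly decrease her distance to the facility by misreporting her location. -/

import Mathlib

open Finset

variable {n m : ℕ}

/-- Members of group `j`. -/
def grp (g : Fin n → Fin m) (j : Fin m) : Finset (Fin n) :=
  Finset.univ.filter (fun i => g i = j)

/-- Maximum total group cost. -/
noncomputable def mtgc (x : Fin n → ℝ) (g : Fin n → Fin m) (y : ℝ) : ℝ :=
  ⨆ j : Fin m, ∑ i ∈ grp g j, |y - x i|

/-- Maximum average group cost. -/
noncomputable def magc (x : Fin n → ℝ) (g : Fin n → Fin m) (y : ℝ) : ℝ :=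
  ⨆ j : Fin m, (∑ i ∈ grp g j, |y - x i|) / (grp g j).card

/-- Left median of a multiset of reals (`⌈k/2⌉`-th smallest). -/
noncomputable def medianOf (s : Multiset ℝ) : ℝ :=
  (s.sort (· ≤ ·)).getD ((Multiset.card s - 1) / 2) 0

/-- Left median of the locations of the members of group `j`. -/
noncomputable def groupMedian (x : Fin n → ℝ) (g : Fin n → Fin m) (j : Fin m) : ℝ :=
  medianOf ((grp g j).val.map x)

/-- A largest group, ties broken by the smallest index. -/
noncomputable def majGroup (g : Fin n → Fin m) [NeZero m] : Fin m :=
  (Finset.univ.filter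
    (fun j => ∀ k : Fin m, (grp g k).card ≤ (grp g j).card)).min' (by
      obtain ⟨b, -, hb⟩ :=
        Finset.exists_max_image Finset.univ (fun j => (grp g j).card) Finset.univ_nonempty
      exact ⟨b, Finset.mem_filter.mpr ⟨Finset.mem_univ _, fun k => hb k (Finset.mem_univ k)⟩⟩)

/-- Majority Group Deterministic Mechanism. -/
noncomputable def MGDM (x : Fin n → ℝ) (g : Fin n → Fin m) [NeZero m] : ℝ :=
  groupMedian x g (majGroup g)

noncomputable def avgc (x : Fin n → ℝ) (g : Fin n → Fin m) (j : Fin m) (y : ℝ) : ℝ :=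
  (∑ i ∈ grp g j, |y - x i|) / (grp g j).card

noncomputable def maxc (x : Fin n → ℝ) (g : Fin n → Fin m) (j : Fin m) (y : ℝ) : ℝ :=
  sSup ((fun i => |y - x i|) '' {i | g i = j})

noncomputable def minc (x : Fin n → ℝ) (g : Fin n → Fin m) (j : Fin m) (y : ℝ) : ℝ :=
  sInf ((fun i => |y - x i|) '' {i | g i = j})

noncomputable def IIF1 (x : Fin n → ℝ) (g : Fin n → Fin m) (y : ℝ) : ℝ :=
  (⨆ j : Fin m, avgc x g j y) + ⨆ j : Fin m, (maxc x g j y - minc x g j y)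
section MedianLemmas

lemma sorted_getElem_le {L : List ℝ} (hL : L.Pairwise (· ≤ ·)) {i j : ℕ}
    (hij : i ≤ j) (hj : j < L.length) : L[i]'(lt_of_le_of_lt hij hj) ≤ L[j] := by
  rcases hij.lt_or_eq with h | h
  · exact List.pairwise_iff_getElem.mp hL i j _ hj h
  · subst h; exact le_refl _

/-- (a) at most q elements are strictly below the q-th element of a sorted list -/
lemma countP_lt_getElem {L : List ℝ} (hL : L.Pairwise (· ≤ ·)) {q : ℕ} (hq : q < L.length) :
    L.countP (fun a => decide (a < L[q])) ≤ q := by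
  set P : ℝ → Bool := fun a => decide (a < L[q]) with hP
  have key : L.countP P = (L.take q).countP P + (L.drop q).countP P := by
    conv_lhs => rw [← List.take_append_drop q L]
    rw [List.countP_append]
  rw [key, hP]
  have h1 : (L.take q).countP (fun a => decide (a < L[q])) ≤ q := by
    calc (L.take q).countP (fun a => decide (a < L[q])) ≤ (L.take q).length :=
          List.countP_le_length
      _ ≤ q := by rw [List.length_take]; exact min_le_left _ _
  have h2 : (L.drop q).countP (fun a => decide (a < L[q])) = 0 := by
    rw [List.countP_eq_zero]
    intro a ha
    obtain ⟨j, hj, rfl⟩ := List.mem_iff_getElem.mp ha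
    rw [List.getElem_drop]
    simp only [decide_eq_true_eq, not_lt]
    exact sorted_getElem_le hL (Nat.le_add_right q j) (by
      have := hj; rwa [List.length_drop, Nat.lt_sub_iff_add_lt, Nat.add_comm] at this)
  omega

/-- (b) at most (len - 1 - q) elements are strictly above the q-th element -/
lemma countP_getElem_lt {L : List ℝ} (hL : L.Pairwise (· ≤ ·)) {q : ℕ} (hq : q < L.length) :
    L.countP (fun a => decide (L[q] < a)) ≤ L.length - 1 - q := by
  set P : ℝ → Bool := fun a => decide (L[q] < a) with hP
  have key : L.countP P = (L.take (q+1)).countP P + (L.drop (q+1)).countP P := by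
    conv_lhs => rw [← List.take_append_drop (q+1) L]
    rw [List.countP_append]
  rw [key, hP]
  have h1 : (L.take (q+1)).countP (fun a => decide (L[q] < a)) = 0 := by
    rw [List.countP_eq_zero]
    intro a ha
    obtain ⟨j, hj, rfl⟩ := List.mem_iff_getElem.mp ha
    rw [List.getElem_take]
    simp only [decide_eq_true_eq, not_lt]
    have hjq : j ≤ q := by
      have := hj; rw [List.length_take] at this; omega
    exact sorted_getElem_le hL hjq hq
  have h2 : (L.drop (q+1)).countP (fun a => decide (L[q] < a)) ≤ L.length - 1 - q := by
    calc (L.drop (q+1)).countP (fun a => decide (L[q] < a)) ≤ (L.drop (q+1)).length :=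
          List.countP_le_length
      _ ≤ L.length - 1 - q := by rw [List.length_drop]; omega
  omega

/-- (c) if few elements are below v, the q-th element is at least v -/
lemma le_getElem_of_countP {L : List ℝ} (hL : L.Pairwise (· ≤ ·)) {q : ℕ} (hq : q < L.length)
    {v : ℝ} (h : L.countP (fun a => decide (a < v)) ≤ q) : v ≤ L[q] := by
  by_contra hc
  push_neg at hc
  have : q + 1 ≤ L.countP (fun a => decide (a < v)) := by
    calc q + 1 = (L.take (q+1)).length := by rw [List.length_take]; omega
      _ = (L.take (q+1)).countP (fun a => decide (a < v)) := by
          symm; rw [List.countP_eq_length]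
          intro a ha
          obtain ⟨j, hj, rfl⟩ := List.mem_iff_getElem.mp ha
          rw [List.getElem_take]
          simp only [decide_eq_true_eq]
          have hjq : j ≤ q := by have := hj; rw [List.length_take] at this; omega
          exact lt_of_le_of_lt (sorted_getElem_le hL hjq hq) hc
      _ ≤ L.countP (fun a => decide (a < v)) := by
          conv_rhs => rw [← List.take_append_drop (q+1) L]
          rw [List.countP_append]; omega
  omega

/-- (d) if few elements are above v, the q-th element is at most v -/
lemma getElem_le_of_countP {L : List ℝ} (hL : L.Pairwise (· ≤ ·)) {q : ℕ} (hq : q < L.length)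
    {v : ℝ} (h : L.countP (fun a => decide (v < a)) ≤ L.length - 1 - q) : L[q] ≤ v := by
  by_contra hc
  push_neg at hc
  have : L.length - q ≤ L.countP (fun a => decide (v < a)) := by
    calc L.length - q = (L.drop q).length := by rw [List.length_drop]
      _ = (L.drop q).countP (fun a => decide (v < a)) := by
          symm; rw [List.countP_eq_length]
          intro a ha
          obtain ⟨j, hj, rfl⟩ := List.mem_iff_getElem.mp ha
          rw [List.getElem_drop]
          simp only [decide_eq_true_eq]
          exact lt_of_lt_of_le hc (sorted_getElem_le hL (Nat.le_add_right q j) (by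
            have := hj; rwa [List.length_drop, Nat.lt_sub_iff_add_lt, Nat.add_comm] at this))
      _ ≤ L.countP (fun a => decide (v < a)) := by
          conv_rhs => rw [← List.take_append_drop q L]
          rw [List.countP_append]; omega
  omega

end MedianLemmas

open Classical in
lemma median_facts (s : Multiset ℝ) (hs : s ≠ 0) :
    s.countP (fun a => a < medianOf s) ≤ (Multiset.card s - 1)/2 ∧
    s.countP (fun a => medianOf s < a) ≤ Multiset.card s - 1 - (Multiset.card s - 1)/2 ∧
    (∀ v : ℝ, s.countP (fun a => a < v) ≤ (Multiset.card s - 1)/2 → v ≤ medianOf s) ∧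
    (∀ v : ℝ, s.countP (fun a => v < a) ≤ Multiset.card s - 1 - (Multiset.card s - 1)/2 →
      medianOf s ≤ v) := by
  have hk : 0 < Multiset.card s := Multiset.card_pos.mpr hs
  set L := s.sort (· ≤ ·) with hLdef
  have hsort : L.Pairwise (· ≤ ·) := Multiset.pairwise_sort s _
  have hL : (↑L : Multiset ℝ) = s := Multiset.sort_eq s _
  have hlen : L.length = Multiset.card s := Multiset.length_sort _
  have hdiv : (Multiset.card s - 1)/2 ≤ Multiset.card s - 1 := Nat.div_le_self _ _
  have hp : (Multiset.card s - 1)/2 < L.length := by omega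
  have hmed : medianOf s = L[(Multiset.card s - 1)/2] := by
    unfold medianOf
    rw [← hLdef, List.getD_eq_getElem _ _ hp]
  have hcnt : ∀ (p : ℝ → Prop) [DecidablePred p],
      s.countP p = L.countP (fun b => decide (p b)) := by
    intro p _
    rw [← hL, Multiset.coe_countP]
  refine ⟨?_, ?_, ?_, ?_⟩
  · rw [hcnt, hmed]
    exact countP_lt_getElem hsort hp
  · rw [hcnt, hmed]
    have h := countP_getElem_lt hsort hp
    omega
  · intro v hv
    rw [hmed]
    exact le_getElem_of_countP hsort hp (by rw [hcnt] at hv; exact hv)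
  · intro v hv
    rw [hmed]
    refine getElem_le_of_countP hsort hp ?_
    rw [hcnt] at hv
    omega

open Classical in
lemma median_sp (t : Multiset ℝ) (a a' : ℝ) :
    |medianOf (a ::ₘ t) - a| ≤ |medianOf (a' ::ₘ t) - a| := by
  have hS : (a ::ₘ t) ≠ 0 := Multiset.cons_ne_zero
  have hS' : (a' ::ₘ t) ≠ 0 := Multiset.cons_ne_zero
  have hcard : Multiset.card (a' ::ₘ t) = Multiset.card (a ::ₘ t) := by
    simp
  set m := medianOf (a ::ₘ t) with hm
  rcases lt_trichotomy a m with h | h | h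
  · -- a < m : show m ≤ medianOf (a' ::ₘ t)
    have h1 : (a ::ₘ t).countP (fun b => b < m) ≤ (Multiset.card (a ::ₘ t) - 1)/2 :=
      (median_facts _ hS).1
    have h2 : (a' ::ₘ t).countP (fun b => b < m) ≤ (a ::ₘ t).countP (fun b => b < m) := by
      rw [Multiset.countP_cons, Multiset.countP_cons]
      split_ifs <;> simp [h] <;> omega
    have hle : m ≤ medianOf (a' ::ₘ t) := by
      refine (median_facts _ hS').2.2.1 m ?_
      rw [hcard]
      exact le_trans h2 h1
    calc |m - a| = m - a := abs_of_nonneg (by linarith)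
      _ ≤ medianOf (a' ::ₘ t) - a := by linarith
      _ ≤ |medianOf (a' ::ₘ t) - a| := le_abs_self _
  · rw [← h]
    simpa using abs_nonneg _
  · -- m < a : show medianOf (a' ::ₘ t) ≤ m
    have h1 : (a ::ₘ t).countP (fun b => m < b) ≤
        Multiset.card (a ::ₘ t) - 1 - (Multiset.card (a ::ₘ t) - 1)/2 :=
      (median_facts _ hS).2.1
    have h2 : (a' ::ₘ t).countP (fun b => m < b) ≤ (a ::ₘ t).countP (fun b => m < b) := by
      rw [Multiset.countP_cons, Multiset.countP_cons]
      split_ifs <;> simp [h] <;> omega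
    have hle : medianOf (a' ::ₘ t) ≤ m := by
      refine (median_facts _ hS').2.2.2 m ?_
      rw [hcard]
      exact le_trans h2 h1
    calc |m - a| = a - m := by rw [abs_sub_comm]; exact abs_of_nonneg (by linarith)
      _ ≤ a - medianOf (a' ::ₘ t) := by linarith
      _ ≤ |medianOf (a' ::ₘ t) - a| := by rw [abs_sub_comm]; exact le_abs_self _

/-- MGDM is strategyproof: no agent can strictly decrease her distance to the
facility by misreporting her location (group memberships are fixed). -/
theorem stmt2 [NeZero m] (x : Fin n → ℝ) (g : Fin n → Fin m) (i : Fin n) (x' : ℝ) :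
    |MGDM x g - x i| ≤ |MGDM (Function.update x i x') g - x i| := by
  classical
  unfold MGDM groupMedian
  set j := majGroup g with hj
  by_cases hij : g i = j
  · have hv : i ∈ (grp g j).val := by
      simp [grp, hij]
    have hdecomp : (grp g j).val = i ::ₘ (grp g j).val.erase i := (Multiset.cons_erase hv).symm
    have hT : ((grp g j).val.erase i).map (Function.update x i x') =
        ((grp g j).val.erase i).map x := by
      refine Multiset.map_congr rfl ?_
      intro a ha
      have hne : a ≠ i := ((grp g j).nodup.mem_erase_iff.mp ha).1
      exact Function.update_of_ne hne _ _
    rw [hdecomp, Multiset.map_cons, Multiset.map_cons, hT, Function.update_self]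
    exact median_sp _ (x i) x'
  · have heq : (grp g j).val.map (Function.update x i x') = (grp g j).val.map x := by
      refine Multiset.map_congr rfl ?_
      intro a ha
      have hgj : g a = j := (Finset.mem_filter.mp (show a ∈ Finset.univ.filter (fun i => g i = j) from ha)).2
      have hne : a ≠ i := fun h => hij (h ▸ hgj)
      exact Function.update_of_ne hne _ _
    rw [heq]
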